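/- Let p > 1, a₊, a₋ > 0, and γ ∈ ℝ with γ > p-1 or γ ≤ (1-2p)/(p-1). Then the function F_p(ρ) = ρ^{-1 + γ/(γ+1) + 1/p} · I₁(ρ)/I₂(ρ) (with I₁, I₂ the p-Laplacian time-map integrals) is strictly monotone increasing on its interval of definition: ]0, a₋/a₊[ when γ > p-1, and ]a₋/a₊, +∞[ when γ ≤ (1-2p)/(p-1). In particular, when γ = (1-2p)/(p-1) the ratio I₁/I₂ is constant. -/

import Mathlib

open Set MeasureTheory intervalIntegral

open Metric

open scoped Interval

private lemma base_pos {x t : ℝ} (hx : x < 1) (ht0 : 0 ≤ t) (ht1 : t ≤ 1) : 0 < 1 - x * t := by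
  rcases le_or_gt x 0 with h | h
  · nlinarith
  · nlinarith

noncomputable def myPhi (α β x : ℝ) : ℝ := ∫ t in (0:ℝ)..1, t ^ (-α) * (1 - x * t) ^ (-β)

noncomputable def myDphi (α β x : ℝ) : ℝ :=
  ∫ t in (0:ℝ)..1, β * (t ^ (1 - α) * (1 - x * t) ^ (-β - 1))

lemma int_aux {a e x : ℝ} (ha : -1 < a) (hx : x < 1) :
    IntervalIntegrable (fun t : ℝ => t ^ a * (1 - x * t) ^ e) volume 0 1 := by
  apply (intervalIntegral.intervalIntegrable_rpow' ha).mul_continuousOn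
  apply ContinuousOn.rpow_const
  · exact (continuous_const.sub (continuous_const.mul continuous_id)).continuousOn
  · intro t ht
    rw [uIcc_of_le (zero_le_one' ℝ)] at ht
    exact Or.inl (base_pos hx ht.1 ht.2).ne'

lemma phi_pos_aux {a e x : ℝ} (ha : -1 < a) (hx : x < 1) :
    0 < ∫ t in (0:ℝ)..1, t ^ a * (1 - x * t) ^ e :=
  intervalIntegral_pos_of_pos_on (int_aux ha hx)
    (fun t ht => mul_pos (Real.rpow_pos_of_pos ht.1 _)
      (Real.rpow_pos_of_pos (base_pos hx ht.1.le ht.2.le) _)) zero_lt_one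

lemma myPhi_pos {α β x : ℝ} (hα1 : α < 1) (hx : x < 1) : 0 < myPhi α β x :=
  phi_pos_aux (by linarith) hx

lemma phi_hasDeriv {α β x₀ : ℝ} (hα0 : 0 < α) (hα1 : α < 1) (hβ : 0 < β) (hx : x₀ < 1) :
    HasDerivAt (myPhi α β) (myDphi α β x₀) x₀ := by
  set ε := (1 - x₀) / 2 with hεdef
  have hεpos : 0 < ε := by simp only [hεdef]; linarith
  set δ := min 1 ε with hδdef
  have hδ0 : 0 < δ := lt_min one_pos hεpos
  have hδ1 : δ ≤ 1 := min_le_left _ _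
  have hball_lt : ∀ x ∈ ball x₀ ε, x < 1 := by
    intro x hx'
    rw [mem_ball, Real.dist_eq, abs_lt] at hx'
    have := hx'.2
    simp only [hεdef] at this
    linarith
  have hball : ∀ x ∈ ball x₀ ε, ∀ t : ℝ, 0 ≤ t → t ≤ 1 → δ ≤ 1 - x * t := by
    intro x hx' t ht0 ht1
    have hx1 : x < 1 := hball_lt x hx'
    rw [mem_ball, Real.dist_eq, abs_lt] at hx'
    have hx2 : x < x₀ + ε := by linarith [hx'.2]
    rcases le_or_gt x 0 with h | h
    · have : x * t ≤ 0 := mul_nonpos_of_nonpos_of_nonneg h ht0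
      linarith
    · have h1 : x * t ≤ x := by nlinarith
      have h2 : x₀ + ε = 1 - ε := by simp only [hεdef]; ring
      have : δ ≤ ε := min_le_right _ _
      linarith
  have huIoc : Ι (0:ℝ) 1 = Ioc 0 1 := uIoc_of_le zero_le_one
  have meas : ∀ x : ℝ, x < 1 → AEStronglyMeasurable
      (fun t : ℝ => t ^ (-α) * (1 - x * t) ^ (-β)) (volume.restrict (Ι (0:ℝ) 1)) := by
    intro x hx1
    rw [huIoc]
    exact (int_aux (by linarith : (-1:ℝ) < -α) hx1).aestronglyMeasurable
  have key := intervalIntegral.hasDerivAt_integral_of_dominated_loc_of_deriv_le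
      (F := fun x t => t ^ (-α) * (1 - x * t) ^ (-β))
      (F' := fun x t => β * (t ^ (1 - α) * (1 - x * t) ^ (-β - 1)))
      (a := (0:ℝ)) (b := 1) (x₀ := x₀) (μ := volume)
      (bound := fun t => β * (t ^ (1 - α) * δ ^ (-β - 1))) (ball_mem_nhds x₀ hεpos)
      ?_ ?_ ?_ ?_ ?_ ?_
  · exact key.2
  · -- hF_meas
    have : Iio (1:ℝ) ∈ nhds x₀ := Iio_mem_nhds hx
    filter_upwards [this] with x hx1
    exact meas x hx1
  · exact int_aux (by linarith : (-1:ℝ) < -α) hx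
  · -- hF'_meas
    rw [huIoc]
    exact ((int_aux (by linarith : (-1:ℝ) < 1 - α) hx).const_mul β).aestronglyMeasurable
  · -- h_bound
    refine Filter.Eventually.of_forall ?_
    intro t ht x hx'
    rw [huIoc] at ht
    have hbt : δ ≤ 1 - x * t := hball x hx' t ht.1.le ht.2
    have hbt0 : 0 < 1 - x * t := lt_of_lt_of_le hδ0 hbt
    have hrp : (1 - x * t) ^ (-β - 1) ≤ δ ^ (-β - 1) :=
      Real.rpow_le_rpow_of_nonpos hδ0 hbt (by linarith)
    have h1 : 0 ≤ t ^ (1 - α) := Real.rpow_nonneg ht.1.le _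
    have h2 : (0:ℝ) ≤ (1 - x * t) ^ (-β - 1) := (Real.rpow_pos_of_pos hbt0 _).le
    rw [Real.norm_eq_abs, abs_of_nonneg (by positivity)]
    exact mul_le_mul_of_nonneg_left (mul_le_mul_of_nonneg_left hrp h1) hβ.le
  · -- bound integrable
    exact (((intervalIntegral.intervalIntegrable_rpow'
      (by linarith : (-1:ℝ) < 1 - α)).mul_const _).const_mul β)
  · -- h_diff
    refine Filter.Eventually.of_forall ?_
    intro t ht x hx'
    rw [huIoc] at ht
    have hbt0 : 0 < 1 - x * t := lt_of_lt_of_le hδ0 (hball x hx' t ht.1.le ht.2)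
    have hb : HasDerivAt (fun x : ℝ => 1 - x * t) (-t) x := by
      simpa using ((hasDerivAt_id x).mul_const t).const_sub 1
    have h2 := hb.rpow_const (p := -β) (Or.inl hbt0.ne')
    have h3 := h2.const_mul (t ^ (-α))
    refine h3.congr_deriv ?_
    show _ = β * (t ^ (1 - α) * (1 - x * t) ^ (-β - 1))
    have ht1 : t ^ (1 - α) = t * t ^ (-α) := by
      rw [show (1:ℝ) - α = 1 + -α by ring, Real.rpow_add ht.1, Real.rpow_one]
    rw [ht1]
    ring

lemma key_lt {α β x : ℝ} (hα0 : 0 < α) (hα1 : α < 1) (hβ : 0 < β) (hx : x < 1) :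
    (1 - x) * myDphi α β x < β * myPhi α β x := by
  have h1 : IntervalIntegrable (fun t : ℝ => β * (t ^ (-α) * (1 - x * t) ^ (-β)))
      volume 0 1 := (int_aux (by linarith) hx).const_mul β
  have h2 : IntervalIntegrable
      (fun t : ℝ => (1 - x) * (β * (t ^ (1 - α) * (1 - x * t) ^ (-β - 1))))
      volume 0 1 := ((int_aux (by linarith) hx).const_mul β).const_mul (1 - x)
  have hpos : 0 < ∫ t in (0:ℝ)..1,
      (β * (t ^ (-α) * (1 - x * t) ^ (-β)) -
        (1 - x) * (β * (t ^ (1 - α) * (1 - x * t) ^ (-β - 1)))) := by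
    apply intervalIntegral_pos_of_pos_on (h1.sub h2) _ zero_lt_one
    intro t ht
    have hbt : 0 < 1 - x * t := base_pos hx ht.1.le ht.2.le
    have e2 : (1 - x * t) ^ (-β) = (1 - x * t) ^ (-β - 1) * (1 - x * t) := by
      have h := Real.rpow_add hbt (-β - 1) 1
      rw [Real.rpow_one, show -β - 1 + 1 = -β by ring] at h
      exact h
    have e3 : t ^ (1 - α) = t ^ (-α) * t := by
      have h := Real.rpow_add ht.1 (-α) 1
      rw [Real.rpow_one, show -α + 1 = 1 - α by ring] at h
      exact h
    rw [e2, e3]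
    have : β * (t ^ (-α) * ((1 - x * t) ^ (-β - 1) * (1 - x * t))) -
        (1 - x) * (β * (t ^ (-α) * t * (1 - x * t) ^ (-β - 1)))
        = β * t ^ (-α) * (1 - x * t) ^ (-β - 1) * (1 - t) := by ring
    rw [this]
    have p1 : (0:ℝ) < t ^ (-α) := Real.rpow_pos_of_pos ht.1 _
    have p2 : (0:ℝ) < (1 - x * t) ^ (-β - 1) := Real.rpow_pos_of_pos hbt _
    have p3 : (0:ℝ) < 1 - t := by linarith [ht.2]
    positivity
  rw [intervalIntegral.integral_sub h1 h2, intervalIntegral.integral_const_mul,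
    intervalIntegral.integral_const_mul, sub_pos] at hpos
  exact hpos

lemma phi_closed {α x : ℝ} (hα0 : 0 < α) (hα1 : α < 1) (hx : x < 1) :
    myPhi α (2 - α) x = (1 - x) ^ (α - 1) / (1 - α) := by
  have h1α : (0:ℝ) < 1 - α := by linarith
  have key : ∫ t in (0:ℝ)..1, t ^ (-α) * (1 - x * t) ^ (-(2 - α))
      = (fun t : ℝ => t ^ (1 - α) * (1 - x * t) ^ (α - 1) / (1 - α)) 1 -
        (fun t : ℝ => t ^ (1 - α) * (1 - x * t) ^ (α - 1) / (1 - α)) 0 := by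
    apply intervalIntegral.integral_eq_sub_of_hasDeriv_right_of_le
      (f := fun t : ℝ => t ^ (1 - α) * (1 - x * t) ^ (α - 1) / (1 - α))
      (f' := fun t : ℝ => t ^ (-α) * (1 - x * t) ^ (-(2 - α))) zero_le_one
    · apply ContinuousOn.div_const
      apply ContinuousOn.mul
      · exact continuousOn_id.rpow_const (fun t _ => Or.inr h1α.le)
      · exact ((continuous_const.sub (continuous_const.mul continuous_id)).continuousOn).rpow_const
          (fun t ht => Or.inl (base_pos hx ht.1 ht.2).ne')
    · intro t ht
      apply HasDerivAt.hasDerivWithinAt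
      have hbt : 0 < 1 - x * t := base_pos hx ht.1.le ht.2.le
      have hd1 : HasDerivAt (fun t : ℝ => t ^ (1 - α)) ((1 - α) * t ^ (1 - α - 1)) t :=
        Real.hasDerivAt_rpow_const (Or.inl ht.1.ne')
      have hb : HasDerivAt (fun t : ℝ => 1 - x * t) (-x) t := by
        simpa using ((hasDerivAt_id t).const_mul x).const_sub 1
      have hd2 := hb.rpow_const (p := α - 1) (Or.inl hbt.ne')
      have h3 := (hd1.mul hd2).div_const (1 - α)
      refine h3.congr_deriv ?_
      have e1 : t ^ (1 - α - 1) = t ^ (-α) := by norm_num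
      have e2 : (1 - x * t) ^ (α - 1) = (1 - x * t) ^ (α - 1 - 1) * (1 - x * t) := by
        have h := Real.rpow_add hbt (α - 1 - 1) 1
        rw [Real.rpow_one, show α - 1 - 1 + 1 = α - 1 by ring] at h
        exact h
      have e3 : t ^ (1 - α) = t ^ (-α) * t := by
        have h := Real.rpow_add ht.1 (-α) 1
        rw [Real.rpow_one, show -α + 1 = 1 - α by ring] at h
        exact h
      rw [e1]
      rw [show -(2 - α) = α - 1 - 1 by ring] at *
      rw [e2, e3]
      field_simp
      ring
    · exact int_aux (by linarith) hx
  rw [myPhi, key]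
  show (1:ℝ) ^ (1 - α) * (1 - x * 1) ^ (α - 1) / (1 - α)
      - (0:ℝ) ^ (1 - α) * (1 - x * 0) ^ (α - 1) / (1 - α) = _
  rw [Real.one_rpow, Real.zero_rpow h1α.ne']
  norm_num

lemma I1_eq (α β ap am ρ : ℝ) (hα0 : 0 < α) (hap : 0 < ap) (ham : 0 < am)
    (hρ : 0 < ρ) (hne : ap * ρ ≠ am) :
    (∫ ξ in (ap * (ρ + 1) / (ap + am))..1, |ap - ap * ξ| ^ (-α) * |ξ| ^ (-β))
      = ((am - ap * ρ) / (ap + am)) *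
        (ap ^ (-α) * |(am - ap * ρ) / (ap + am)| ^ (-α) *
          myPhi α β ((am - ap * ρ) / (ap + am))) := by
  set μ := (am - ap * ρ) / (ap + am) with hμdef
  have hapam : 0 < ap + am := by linarith
  have hμne : μ ≠ 0 := by
    simp only [hμdef]
    exact div_ne_zero (sub_ne_zero.mpr fun h => hne h.symm) hapam.ne'
  have hμ1 : μ < 1 := by
    rw [hμdef, div_lt_one hapam]
    nlinarith
  have hsub := intervalIntegral.integral_comp_mul_add (a := (1:ℝ)) (b := 0)
    (fun ξ => |ap - ap * ξ| ^ (-α) * |ξ| ^ (-β)) (neg_ne_zero.mpr hμne) 1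
  have hA : -μ * 1 + 1 = ap * (ρ + 1) / (ap + am) := by
    rw [hμdef]; field_simp; ring
  have hB : -μ * 0 + 1 = (1:ℝ) := by ring
  rw [hA, hB] at hsub
  -- hsub : ∫ t in 1..0, f (-μ * t + 1) = (-μ)⁻¹ • ∫ ξ in (ap*(ρ+1)/(ap+am))..1, f ξ
  have hcongr : ∀ t ∈ uIcc (0:ℝ) 1,
      |ap - ap * (-μ * t + 1)| ^ (-α) * |(-μ * t + 1)| ^ (-β)
        = (ap ^ (-α) * |μ| ^ (-α)) * (t ^ (-α) * (1 - μ * t) ^ (-β)) := by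
    intro t ht
    rw [uIcc_of_le (zero_le_one' ℝ)] at ht
    have h1 : ap - ap * (-μ * t + 1) = ap * (μ * t) := by ring
    have h2 : |ap * (μ * t)| = ap * (|μ| * t) := by
      rw [abs_mul, abs_mul, abs_of_pos hap, abs_of_nonneg ht.1]
    have h3 : (ap * (|μ| * t)) ^ (-α) = ap ^ (-α) * (|μ| ^ (-α) * t ^ (-α)) := by
      rw [Real.mul_rpow hap.le (mul_nonneg (abs_nonneg μ) ht.1), Real.mul_rpow (abs_nonneg μ) ht.1]
    have h4 : |(-μ * t + 1)| = 1 - μ * t := by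
      rw [show -μ * t + 1 = 1 - μ * t by ring]
      exact abs_of_pos (base_pos hμ1 ht.1 ht.2)
    rw [h1, h2, h3, h4]
    ring
  rw [intervalIntegral.integral_symm] at hsub
  -- now: -∫ t in 0..1, f(-μ t + 1) = (-μ)⁻¹ • ∫ ...
  rw [intervalIntegral.integral_congr hcongr, intervalIntegral.integral_const_mul] at hsub
  have := congrArg (fun z => (-μ) * z) hsub
  simp only [smul_eq_mul] at this
  rw [mul_inv_cancel_left₀ (neg_ne_zero.mpr hμne)] at this
  rw [← this, myPhi]
  ring

lemma I2_eq (α β ap am ρ : ℝ) (hap : 0 < ap) (ham : 0 < am)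
    (hρ : 0 < ρ) (hne : ap * ρ ≠ am) :
    (∫ ξ in (ap / am)..(ap / (ap + am) * ((ρ + 1) / ρ)), |am * ξ - ap| ^ (-α) * |ξ| ^ (-β))
      = (ap * ((am - ap * ρ) / ((ap + am) * ρ)) / am) *
        (ap ^ (-α) * |(am - ap * ρ) / ((ap + am) * ρ)| ^ (-α) * (ap / am) ^ (-β) *
          myPhi α β (-((am - ap * ρ) / ((ap + am) * ρ)))) := by
  set m := (am - ap * ρ) / ((ap + am) * ρ) with hmdef
  have hapam : 0 < ap + am := by linarith
  have hmne : m ≠ 0 := by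
    simp only [hmdef]
    exact div_ne_zero (sub_ne_zero.mpr fun h => hne h.symm) (by positivity)
  have hm1 : -m < 1 := by
    rw [hmdef, ← neg_div, div_lt_one (by positivity)]
    nlinarith
  have hcne : ap * m / am ≠ 0 := by
    apply div_ne_zero _ ham.ne'
    exact mul_ne_zero hap.ne' hmne
  have hsub := intervalIntegral.integral_comp_mul_add (a := (0:ℝ)) (b := 1)
    (fun ξ => |am * ξ - ap| ^ (-α) * |ξ| ^ (-β)) hcne (ap / am)
  have hA : ap * m / am * 0 + ap / am = ap / am := by ring
  have hB : ap * m / am * 1 + ap / am = ap / (ap + am) * ((ρ + 1) / ρ) := by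
    rw [hmdef]; field_simp; ring
  rw [hA, hB] at hsub
  have hcongr : ∀ t ∈ uIcc (0:ℝ) 1,
      |am * (ap * m / am * t + ap / am) - ap| ^ (-α) * |ap * m / am * t + ap / am| ^ (-β)
        = (ap ^ (-α) * |m| ^ (-α) * (ap / am) ^ (-β)) * (t ^ (-α) * (1 - -m * t) ^ (-β)) := by
    intro t ht
    rw [uIcc_of_le (zero_le_one' ℝ)] at ht
    have h1 : am * (ap * m / am * t + ap / am) - ap = ap * (m * t) := by
      field_simp
      ring
    have h2 : |ap * (m * t)| = ap * (|m| * t) := by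
      rw [abs_mul, abs_mul, abs_of_pos hap, abs_of_nonneg ht.1]
    have h3 : (ap * (|m| * t)) ^ (-α) = ap ^ (-α) * (|m| ^ (-α) * t ^ (-α)) := by
      rw [Real.mul_rpow hap.le (mul_nonneg (abs_nonneg m) ht.1),
        Real.mul_rpow (abs_nonneg m) ht.1]
    have hbt : 0 < 1 - -m * t := base_pos hm1 ht.1 ht.2
    have h4 : ap * m / am * t + ap / am = ap / am * (1 - -m * t) := by ring
    have h5 : |ap / am * (1 - -m * t)| = ap / am * (1 - -m * t) :=
      abs_of_pos (mul_pos (by positivity) hbt)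
    have h6 : (ap / am * (1 - -m * t)) ^ (-β)
        = (ap / am) ^ (-β) * (1 - -m * t) ^ (-β) :=
      Real.mul_rpow (by positivity) hbt.le
    rw [h1, h2, h3, h4, h5, h6]
    ring
  rw [intervalIntegral.integral_congr hcongr, intervalIntegral.integral_const_mul] at hsub
  have := congrArg (fun z => (ap * m / am) * z) hsub
  simp only [smul_eq_mul] at this
  rw [mul_inv_cancel_left₀ hcne] at this
  rw [← this, myPhi]

lemma ratio_eq (α β ap am ρ P1 P2 : ℝ) (hap : 0 < ap) (ham : 0 < am)
    (hρ : 0 < ρ) (hne : ap * ρ ≠ am) (hP2 : P2 ≠ 0) :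
    (((am - ap * ρ) / (ap + am)) * (ap ^ (-α) * |(am - ap * ρ) / (ap + am)| ^ (-α) * P1)) /
      ((ap * ((am - ap * ρ) / ((ap + am) * ρ)) / am) *
        (ap ^ (-α) * |(am - ap * ρ) / ((ap + am) * ρ)| ^ (-α) * (ap / am) ^ (-β) * P2))
      = (am / ap) ^ (1 - β) * ρ ^ (1 - α) * (P1 / P2) := by
  have hapam : 0 < ap + am := by linarith
  set m := (am - ap * ρ) / ((ap + am) * ρ) with hmdef
  have hmne : m ≠ 0 := by
    simp only [hmdef]
    exact div_ne_zero (sub_ne_zero.mpr fun h => hne h.symm) (by positivity)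
  have hμm : (am - ap * ρ) / (ap + am) = m * ρ := by
    rw [hmdef]; field_simp
  have habs : |m * ρ| = |m| * ρ := by rw [abs_mul, abs_of_pos hρ]
  have hmr : (|m| * ρ) ^ (-α) = |m| ^ (-α) * ρ ^ (-α) :=
    Real.mul_rpow (abs_nonneg m) hρ.le
  have hc0 : (0:ℝ) < ap / am := by positivity
  have hr : ρ ^ ((1:ℝ) - α) = ρ * ρ ^ (-α) := by
    have h := Real.rpow_add hρ 1 (-α)
    rw [Real.rpow_one, show (1:ℝ) + -α = 1 - α by ring] at h
    exact h
  have hb1 : (ap / am) * (ap / am) ^ (-β) = (ap / am) ^ ((1:ℝ) - β) := by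
    have h := Real.rpow_add hc0 1 (-β)
    rw [Real.rpow_one, show (1:ℝ) + -β = 1 - β by ring] at h
    exact h.symm
  have hcne : (ap / am) ^ ((1:ℝ) - β) ≠ 0 := (Real.rpow_pos_of_pos hc0 _).ne'
  have hb2' : (am / ap) ^ ((1:ℝ) - β) = ((ap / am) ^ ((1:ℝ) - β))⁻¹ := by
    rw [← Real.inv_rpow hc0.le]
    congr 1
    field_simp
  have hb1' : (ap / am) ^ (-β) = (ap / am) ^ ((1:ℝ) - β) * (am / ap) := by
    rw [← hb1]
    field_simp
  have h1 : ap ^ (-α) ≠ 0 := (Real.rpow_pos_of_pos hap _).ne'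
  have h2 : |m| ^ (-α) ≠ 0 := (Real.rpow_pos_of_pos (abs_pos.mpr hmne) _).ne'
  have h3 : ρ ^ (-α) ≠ 0 := (Real.rpow_pos_of_pos hρ _).ne'
  rw [hμm, habs, hmr, hb2', hb1', hr]
  field_simp

lemma mono_aux (α β ap am : ℝ) (Fp : ℝ → ℝ) (S : Set ℝ)
    (hα0 : 0 < α) (hα1 : α < 1) (hβ : 0 < β) (hap : 0 < ap) (ham : 0 < am)
    (hconv : Convex ℝ S) (hopen : IsOpen S)
    (hS : ∀ ρ ∈ S, 0 < ρ ∧ ap * ρ ≠ am)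
    (hFpS : ∀ ρ ∈ S, Fp ρ = (am / ap) ^ ((1:ℝ) - β) * ρ ^ β *
      (myPhi α β ((am - ap * ρ) / (ap + am)) /
        myPhi α β (-((am - ap * ρ) / ((ap + am) * ρ))))) :
    StrictMonoOn Fp S := by
  have hapam : 0 < ap + am := by linarith
  have hμ1 : ∀ ρ : ℝ, 0 < ρ → (am - ap * ρ) / (ap + am) < 1 := by
    intro ρ hρ
    rw [div_lt_one hapam]
    nlinarith
  have hm1 : ∀ ρ : ℝ, 0 < ρ → -((am - ap * ρ) / ((ap + am) * ρ)) < 1 := by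
    intro ρ hρ
    rw [← neg_div, div_lt_one (by positivity)]
    nlinarith
  set L : ℝ → ℝ := fun ρ =>
    Real.log ((am / ap) ^ ((1:ℝ) - β)) + β * Real.log ρ +
      Real.log (myPhi α β ((am - ap * ρ) / (ap + am))) -
      Real.log (myPhi α β (-((am - ap * ρ) / ((ap + am) * ρ)))) with hLdef
  have hexp : ∀ ρ ∈ S, Fp ρ = Real.exp (L ρ) := by
    intro ρ hρS
    obtain ⟨hρ, _⟩ := hS ρ hρS
    have p0 : (0:ℝ) < (am / ap) ^ ((1:ℝ) - β) := Real.rpow_pos_of_pos (by positivity) _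
    have p1 : 0 < myPhi α β ((am - ap * ρ) / (ap + am)) := myPhi_pos hα1 (hμ1 ρ hρ)
    have p2 : 0 < myPhi α β (-((am - ap * ρ) / ((ap + am) * ρ))) :=
      myPhi_pos hα1 (hm1 ρ hρ)
    rw [hFpS ρ hρS, hLdef]
    simp only
    rw [Real.exp_sub, Real.exp_add, Real.exp_add, Real.exp_log p0, Real.exp_log p1,
      Real.exp_log p2, mul_comm β (Real.log ρ), ← Real.rpow_def_of_pos hρ]
    ring
  have claim2 : ∀ ρ ∈ S, ∃ d : ℝ, 0 < d ∧ HasDerivAt L d ρ := by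
    intro ρ hρS
    obtain ⟨hρ, hne⟩ := hS ρ hρS
    have hμρ1 : (am - ap * ρ) / (ap + am) < 1 := hμ1 ρ hρ
    have hmρ1 : -((am - ap * ρ) / ((ap + am) * ρ)) < 1 := hm1 ρ hρ
    have p1 : 0 < myPhi α β ((am - ap * ρ) / (ap + am)) := myPhi_pos hα1 hμρ1
    have p2 : 0 < myPhi α β (-((am - ap * ρ) / ((ap + am) * ρ))) := myPhi_pos hα1 hmρ1
    -- derivative of μ(ρ)
    have hdμ : HasDerivAt (fun ρ : ℝ => (am - ap * ρ) / (ap + am))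
        (-ap / (ap + am)) ρ := by
      have h := (((hasDerivAt_id ρ).const_mul ap).const_sub am).div_const (ap + am)
      refine h.congr_deriv ?_
      ring
    -- derivative of m(ρ)
    have hdm : HasDerivAt (fun ρ : ℝ => (am - ap * ρ) / ((ap + am) * ρ))
        (-am / ((ap + am) * ρ ^ 2)) ρ := by
      have hu : HasDerivAt (fun ρ : ℝ => am - ap * ρ) (-(ap * 1)) ρ :=
        ((hasDerivAt_id ρ).const_mul ap).const_sub am
      have hv : HasDerivAt (fun ρ : ℝ => (ap + am) * ρ) ((ap + am) * 1) ρ :=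
        (hasDerivAt_id ρ).const_mul (ap + am)
      have hvne : (ap + am) * ρ ≠ 0 := by positivity
      have h := hu.div hv hvne
      refine h.congr_deriv ?_
      field_simp
      ring
    have hdmneg : HasDerivAt (fun ρ : ℝ => -((am - ap * ρ) / ((ap + am) * ρ)))
        (am / ((ap + am) * ρ ^ 2)) ρ := by
      have := hdm.neg
      refine this.congr_deriv ?_
      ring
    -- composed derivatives
    have hPμ : HasDerivAt (fun ρ : ℝ => myPhi α β ((am - ap * ρ) / (ap + am)))
        (myDphi α β ((am - ap * ρ) / (ap + am)) * (-ap / (ap + am))) ρ :=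
      by have := (phi_hasDeriv hα0 hα1 hβ hμρ1).comp ρ hdμ; exact this
    have hPm : HasDerivAt
        (fun ρ : ℝ => myPhi α β (-((am - ap * ρ) / ((ap + am) * ρ))))
        (myDphi α β (-((am - ap * ρ) / ((ap + am) * ρ))) * (am / ((ap + am) * ρ ^ 2)))
        ρ := by have := (phi_hasDeriv hα0 hα1 hβ hmρ1).comp ρ hdmneg; exact this
    have hL : HasDerivAt L
        (0 + β * ρ⁻¹ +
          myDphi α β ((am - ap * ρ) / (ap + am)) * (-ap / (ap + am)) /
            myPhi α β ((am - ap * ρ) / (ap + am)) -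
          myDphi α β (-((am - ap * ρ) / ((ap + am) * ρ))) * (am / ((ap + am) * ρ ^ 2)) /
            myPhi α β (-((am - ap * ρ) / ((ap + am) * ρ)))) ρ := by
      exact (((hasDerivAt_const ρ _).add
        ((Real.hasDerivAt_log hρ.ne').const_mul β)).add (hPμ.log p1.ne')).sub
        (hPm.log p2.ne')
    refine ⟨_, ?_, hL⟩
    -- positivity of the derivative
    have q1lt : myDphi α β ((am - ap * ρ) / (ap + am)) /
        myPhi α β ((am - ap * ρ) / (ap + am)) < β / (1 - (am - ap * ρ) / (ap + am)) := by
      rw [div_lt_div_iff₀ p1 (by linarith)]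
      nlinarith [key_lt hα0 hα1 hβ hμρ1]
    have q2lt : myDphi α β (-((am - ap * ρ) / ((ap + am) * ρ))) /
        myPhi α β (-((am - ap * ρ) / ((ap + am) * ρ)))
        < β / (1 - -((am - ap * ρ) / ((ap + am) * ρ))) := by
      rw [div_lt_div_iff₀ p2 (by linarith)]
      nlinarith [key_lt hα0 hα1 hβ hmρ1]
    have c1pos : 0 < ap / (ap + am) := by positivity
    have c2pos : 0 < am / ((ap + am) * ρ ^ 2) := by positivity
    have hzero : β * ρ⁻¹ - ap / (ap + am) * (β / (1 - (am - ap * ρ) / (ap + am))) -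
        am / ((ap + am) * ρ ^ 2) * (β / (1 - -((am - ap * ρ) / ((ap + am) * ρ)))) = 0 := by
      have d1 : 1 - (am - ap * ρ) / (ap + am) = ap * (1 + ρ) / (ap + am) := by
        field_simp; ring
      have d2 : 1 - -((am - ap * ρ) / ((ap + am) * ρ)) = am * (1 + ρ) / ((ap + am) * ρ) := by
        field_simp; ring
      rw [d1, d2]
      have h1ρ : (0:ℝ) < 1 + ρ := by linarith
      field_simp
      ring
    have h1 : ap / (ap + am) * (myDphi α β ((am - ap * ρ) / (ap + am)) /
        myPhi α β ((am - ap * ρ) / (ap + am)))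
        < ap / (ap + am) * (β / (1 - (am - ap * ρ) / (ap + am))) :=
      mul_lt_mul_of_pos_left q1lt c1pos
    have h2 : am / ((ap + am) * ρ ^ 2) * (myDphi α β (-((am - ap * ρ) / ((ap + am) * ρ))) /
        myPhi α β (-((am - ap * ρ) / ((ap + am) * ρ))))
        < am / ((ap + am) * ρ ^ 2) * (β / (1 - -((am - ap * ρ) / ((ap + am) * ρ)))) :=
      mul_lt_mul_of_pos_left q2lt c2pos
    have hre : 0 + β * ρ⁻¹ +
        myDphi α β ((am - ap * ρ) / (ap + am)) * (-ap / (ap + am)) /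
          myPhi α β ((am - ap * ρ) / (ap + am)) -
        myDphi α β (-((am - ap * ρ) / ((ap + am) * ρ))) * (am / ((ap + am) * ρ ^ 2)) /
          myPhi α β (-((am - ap * ρ) / ((ap + am) * ρ)))
        = β * ρ⁻¹ -
          ap / (ap + am) * (myDphi α β ((am - ap * ρ) / (ap + am)) /
            myPhi α β ((am - ap * ρ) / (ap + am))) -
          am / ((ap + am) * ρ ^ 2) * (myDphi α β (-((am - ap * ρ) / ((ap + am) * ρ))) /
            myPhi α β (-((am - ap * ρ) / ((ap + am) * ρ)))) := by
      ring
    rw [hre]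
    linarith
  have hcont : ContinuousOn L S := fun ρ hρ =>
    ((claim2 ρ hρ).choose_spec.2).continuousAt.continuousWithinAt
  have hLmono : StrictMonoOn L S := by
    apply strictMonoOn_of_deriv_pos hconv hcont
    intro ρ hρ'
    rw [hopen.interior_eq] at hρ'
    obtain ⟨d, hd0, hd⟩ := claim2 ρ hρ'
    rw [hd.deriv]
    exact hd0
  intro a ha b hb hab
  rw [hexp a ha, hexp b hb]
  exact Real.exp_lt_exp.mpr (hLmono ha hb hab)

/-- strict monotonicity of the p-Laplacian time-map ratio
`F_p(ρ) = ρ^{-1+γ/(γ+1)+1/p} I₁(ρ)/I₂(ρ)`. -/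
theorem stmt_16 (p ap am γ : ℝ) (hp : 1 < p) (hap : 0 < ap) (ham : 0 < am)
    (hγ : p - 1 < γ ∨ γ ≤ (1 - 2 * p) / (p - 1))
    (I₁ I₂ Fp : ℝ → ℝ)
    (hI₁ : ∀ ρ : ℝ, I₁ ρ =
      ∫ ξ in (ap * (ρ + 1) / (ap + am))..1,
        |ap - ap * ξ| ^ (-(1 / p)) * |ξ| ^ (-(γ / (γ + 1))))
    (hI₂ : ∀ ρ : ℝ, I₂ ρ =
      ∫ ξ in (ap / am)..(ap / (ap + am) * ((ρ + 1) / ρ)),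
        |am * ξ - ap| ^ (-(1 / p)) * |ξ| ^ (-(γ / (γ + 1))))
    (hFp : ∀ ρ : ℝ, Fp ρ = ρ ^ (-1 + γ / (γ + 1) + 1 / p) * (I₁ ρ / I₂ ρ)) :
    (p - 1 < γ → StrictMonoOn Fp (Ioo 0 (am / ap))) ∧
      (γ ≤ (1 - 2 * p) / (p - 1) → StrictMonoOn Fp (Ioi (am / ap))) ∧
      (γ = (1 - 2 * p) / (p - 1) →
        ∃ c : ℝ, ∀ ρ ∈ Ioi (am / ap), I₁ ρ / I₂ ρ = c) := by
  have hp0 : 0 < p := by linarith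
  set α := 1 / p with hαdef
  set β := γ / (γ + 1) with hβdef
  have hα0 : 0 < α := by rw [hαdef]; positivity
  have hα1 : α < 1 := by rw [hαdef, div_lt_one hp0]; linarith
  have hapam : 0 < ap + am := by linarith
  have hmlt1 : ∀ ρ : ℝ, 0 < ρ → -((am - ap * ρ) / ((ap + am) * ρ)) < 1 := by
    intro ρ hρ
    rw [← neg_div, div_lt_one (by positivity)]
    nlinarith
  have hμlt1 : ∀ ρ : ℝ, 0 < ρ → (am - ap * ρ) / (ap + am) < 1 := by
    intro ρ hρ
    rw [div_lt_one hapam]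
    nlinarith
  have hform : ∀ ρ : ℝ, 0 < ρ → ap * ρ ≠ am →
      Fp ρ = (am / ap) ^ ((1:ℝ) - β) * ρ ^ β *
        (myPhi α β ((am - ap * ρ) / (ap + am)) /
          myPhi α β (-((am - ap * ρ) / ((ap + am) * ρ)))) := by
    intro ρ hρ hne
    have p2 : 0 < myPhi α β (-((am - ap * ρ) / ((ap + am) * ρ))) :=
      myPhi_pos hα1 (hmlt1 ρ hρ)
    have e1 := (hI₁ ρ).trans (I1_eq α β ap am ρ hα0 hap ham hρ hne)
    have e2 := (hI₂ ρ).trans (I2_eq α β ap am ρ hap ham hρ hne)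
    rw [hFp ρ, e1, e2, ratio_eq α β ap am ρ _ _ hap ham hρ hne p2.ne']
    have hcomb : ρ ^ (-1 + β + α) * ρ ^ ((1:ℝ) - α) = ρ ^ β := by
      rw [← Real.rpow_add hρ]
      congr 1
      ring
    rw [← hcomb]
    ring
  refine ⟨?_, ?_, ?_⟩
  · -- part 1
    intro hγ1
    have hβ0 : 0 < β := by
      rw [hβdef]
      apply div_pos <;> linarith
    apply mono_aux α β ap am Fp _ hα0 hα1 hβ0 hap ham (convex_Ioo _ _) isOpen_Ioo
    · intro ρ hρ
      refine ⟨hρ.1, ?_⟩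
      have := (lt_div_iff₀ hap).mp hρ.2
      intro hcon
      nlinarith
    · intro ρ hρ
      refine hform ρ hρ.1 ?_
      have := (lt_div_iff₀ hap).mp hρ.2
      intro hcon
      nlinarith
  · -- part 2
    intro hγ2
    have hγlt : γ < -1 := by
      have h1 : (1 - 2 * p) / (p - 1) < -1 := by
        rw [div_lt_iff₀ (by linarith : (0:ℝ) < p - 1)]
        nlinarith
      linarith
    have hβ0 : 0 < β := by
      rw [hβdef]
      apply div_pos_of_neg_of_neg <;> linarith
    apply mono_aux α β ap am Fp _ hα0 hα1 hβ0 hap ham (convex_Ioi _) isOpen_Ioi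
    · intro ρ hρ
      have hρ0 : 0 < ρ := lt_trans (div_pos ham hap) hρ
      refine ⟨hρ0, ?_⟩
      have := (div_lt_iff₀ hap).mp (mem_Ioi.mp hρ)
      intro hcon
      nlinarith
    · intro ρ hρ
      have hρ0 : 0 < ρ := lt_trans (div_pos ham hap) hρ
      refine hform ρ hρ0 ?_
      have := (div_lt_iff₀ hap).mp (mem_Ioi.mp hρ)
      intro hcon
      nlinarith
  · -- part 3
    intro hγeq
    have hp1 : p - 1 ≠ 0 := by linarith
    have hβα : β = 2 - α := by
      have hγ1 : γ + 1 = -p / (p - 1) := by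
        rw [hγeq]
        field_simp
        ring
      have hγ1ne : γ + 1 ≠ 0 := by
        rw [hγ1]
        exact div_ne_zero (neg_ne_zero.mpr hp0.ne') hp1
      rw [hβdef, hαdef, div_eq_iff hγ1ne, hγeq]
      field_simp
      ring
    refine ⟨1, ?_⟩
    intro ρ hρmem
    have hρ0 : 0 < ρ := lt_trans (div_pos ham hap) hρmem
    have hne : ap * ρ ≠ am := by
      have := (div_lt_iff₀ hap).mp (mem_Ioi.mp hρmem)
      intro hcon
      nlinarith
    have hμ1 : (am - ap * ρ) / (ap + am) < 1 := hμlt1 ρ hρ0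
    have hm1 : -((am - ap * ρ) / ((ap + am) * ρ)) < 1 := hmlt1 ρ hρ0
    have hN : 0 < 1 - -((am - ap * ρ) / ((ap + am) * ρ)) := by linarith
    rw [(hI₁ ρ).trans (I1_eq α β ap am ρ hα0 hap ham hρ0 hne),
      (hI₂ ρ).trans (I2_eq α β ap am ρ hap ham hρ0 hne),
      ratio_eq α β ap am ρ _ _ hap ham hρ0 hne (myPhi_pos hα1 (hmlt1 ρ hρ0)).ne',
      hβα, phi_closed hα0 hα1 hμ1, phi_closed hα0 hα1 hm1]
    have hd1 : 1 - (am - ap * ρ) / (ap + am)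
        = ap / am * ρ * (1 - -((am - ap * ρ) / ((ap + am) * ρ))) := by
      field_simp
      ring
    rw [hd1, Real.mul_rpow (by positivity) hN.le,
      Real.mul_rpow (by positivity : (0:ℝ) ≤ ap / am) hρ0.le]
    have k2 : (am / ap) ^ (α - 1) * (ap / am) ^ (α - 1) = 1 := by
      rw [← Real.mul_rpow (by positivity) (by positivity),
        show am / ap * (ap / am) = 1 by field_simp, Real.one_rpow]
    have k3 : ρ ^ ((1:ℝ) - α) * ρ ^ (α - 1) = 1 := by
      rw [← Real.rpow_add hρ0, show (1:ℝ) - α + (α - 1) = 0 by ring, Real.rpow_zero]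
    have hNα : (1 - -((am - ap * ρ) / ((ap + am) * ρ))) ^ (α - 1) ≠ 0 :=
      (Real.rpow_pos_of_pos hN _).ne'
    have h1α : (1:ℝ) - α ≠ 0 := by linarith
    rw [show (1:ℝ) - (2 - α) = α - 1 by ring]
    generalize hNg : (1 - -((am - ap * ρ) / ((ap + am) * ρ))) ^ (α - 1) = Nv at hNα ⊢
    generalize hA : (am / ap) ^ (α - 1) = A at k2 ⊢
    generalize hB : (ap / am) ^ (α - 1) = B at k2 ⊢
    generalize hr1 : ρ ^ ((1:ℝ) - α) = r1 at k3 ⊢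
    generalize hr2 : ρ ^ (α - 1) = r2 at k3 ⊢
    field_simp
    linear_combination (r1 * r2) * k2 + k3
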